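/- Let B be an r×n binary matrix and let I be a set of column indices such that, in the bipartite graph whose left vertices are the columns of I, whose right vertices are the rows of B, and whose edges are the positions (i,j) with j ∈ I and B(i,j) = 1, there is no matching saturating all columns of I. Then there exists a nonempty subset V ⊆ I with a(V) < |V|; hence I contains a nonempty stopping set J with a(J) < |J|, and for every field F and every F-labeling H of B, the submatrix H_I of H consisting of the columns indexed by I satisfies rank(H_I) < |I|. -/

import Mathlib

open Matrix

open Classical in
/-- The number of rows of `B` that are active on the column set `J`. -/
noncomputable def activeCard {r n : ℕ} (B : Matrix (Fin r) (Fin n) Bool) (J : Finset (Fin n)) : ℕ :=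
  (Finset.univ.filter fun i : Fin r => ∃ j ∈ J, B i j = true).card

/-- Extraction of a stopping set from a deficient set. -/
lemma exists_stopping_aux {r n : ℕ} (B : Matrix (Fin r) (Fin n) Bool) :
    ∀ N (V : Finset (Fin n)), V.card ≤ N → activeCard B V < V.card →
    ∃ J ⊆ V, J.Nonempty ∧ (∀ i : Fin r, (J.filter fun j => B i j = true).card ≠ 1) ∧
      activeCard B J < J.card := by
  classical
  intro N
  induction N with
  | zero =>
    intro V hV hlt
    omega
  | succ N ih =>
    intro V hV hlt
    by_cases hstop : ∀ i : Fin r, (V.filter fun j => B i j = true).card ≠ 1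
    · exact ⟨V, le_refl _, Finset.card_pos.mp (by omega), hstop, hlt⟩
    · push_neg at hstop
      obtain ⟨i₀, hi₀⟩ := hstop
      obtain ⟨j₀, hj₀⟩ := Finset.card_eq_one.mp hi₀
      have hj₀V : j₀ ∈ V ∧ B i₀ j₀ = true := by
        have : j₀ ∈ V.filter fun j => B i₀ j = true := by rw [hj₀]; simp
        simpa using this
      have hcard : (V.erase j₀).card + 1 = V.card := by
        rw [Finset.card_erase_of_mem hj₀V.1]
        have : 0 < V.card := Finset.card_pos.mpr ⟨j₀, hj₀V.1⟩
        omega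
      -- the active set of V' is contained in (active set of V) minus i₀
      have hsub : (Finset.univ.filter fun i : Fin r => ∃ j ∈ V.erase j₀, B i j = true) ⊆
          (Finset.univ.filter fun i : Fin r => ∃ j ∈ V, B i j = true).erase i₀ := by
        intro i hi
        simp only [Finset.mem_filter, Finset.mem_univ, true_and] at hi
        obtain ⟨j, hjV', hBij⟩ := hi
        have hjV : j ∈ V := Finset.mem_of_mem_erase hjV'
        have hne : j ≠ j₀ := Finset.ne_of_mem_erase hjV'
        have hii : i ≠ i₀ := by
          intro hii
          subst hii
          have hmem : j ∈ V.filter fun j => B i j = true := Finset.mem_filter.mpr ⟨hjV, hBij⟩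
          rw [hj₀] at hmem
          exact hne (Finset.mem_singleton.mp hmem)
        refine Finset.mem_erase.mpr ⟨hii, ?_⟩
        simp only [Finset.mem_filter, Finset.mem_univ, true_and]
        exact ⟨j, hjV, hBij⟩
      have hi₀mem : i₀ ∈ Finset.univ.filter fun i : Fin r => ∃ j ∈ V, B i j = true := by
        simp only [Finset.mem_filter, Finset.mem_univ, true_and]
        exact ⟨j₀, hj₀V.1, hj₀V.2⟩
      have hactlt : activeCard B (V.erase j₀) + 1 ≤ activeCard B V := by
        have h1 := Finset.card_le_card hsub
        rw [Finset.card_erase_of_mem hi₀mem] at h1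
        have h2 : 0 < (Finset.univ.filter fun i : Fin r => ∃ j ∈ V, B i j = true).card :=
          Finset.card_pos.mpr ⟨i₀, hi₀mem⟩
        unfold activeCard
        omega
      have hlt' : activeCard B (V.erase j₀) < (V.erase j₀).card := by omega
      obtain ⟨J, hJV', hJne, hJstop, hJlt⟩ := ih (V.erase j₀) (by omega) hlt'
      exact ⟨J, hJV'.trans (Finset.erase_subset _ _), hJne, hJstop, hJlt⟩

/-- If in the bipartite (Tanner) graph between the columns of `I`
and the rows of `B` there is no matching saturating `I`, then some nonempty
`V ⊆ I` has fewer active rows than columns; hence `I` contains a nonempty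
stopping set `J` with `a(J) < |J|`, and for every field `F` and every
`F`-labeling `H` of `B` the column submatrix `H_I` has rank less than `|I|`. -/
theorem no_matching_deficient_and_rank_deficient {r n : ℕ}
    (B : Matrix (Fin r) (Fin n) Bool) (I : Finset (Fin n))
    (hnomatch : ¬ ∃ f : {j : Fin n // j ∈ I} → Fin r,
      Function.Injective f ∧ ∀ j : {j : Fin n // j ∈ I}, B (f j) j.1 = true) :
    (∃ V ⊆ I, V.Nonempty ∧ activeCard B V < V.card) ∧
    (∃ J ⊆ I, J.Nonempty ∧
      (∀ i : Fin r, (J.filter fun j => B i j = true).card ≠ 1) ∧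
      activeCard B J < J.card) ∧
    (∀ (F : Type) [Field F] (H : Matrix (Fin r) (Fin n) F),
      (∀ i j, H i j ≠ 0 ↔ B i j = true) →
      (H.submatrix id (fun j : {j : Fin n // j ∈ I} => j.1)).rank < I.card) := by
  classical
  -- Part 1: Hall's theorem
  set t : {j : Fin n // j ∈ I} → Finset (Fin r) :=
    fun j => Finset.univ.filter fun i => B i j.1 = true with ht
  have hhall : ¬ ∀ s : Finset {j : Fin n // j ∈ I}, s.card ≤ (s.biUnion t).card := by
    intro h
    obtain ⟨f, hfinj, hf⟩ := (Finset.all_card_le_biUnion_card_iff_exists_injective t).mp h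
    exact hnomatch ⟨f, hfinj, fun j => by
      have := hf j; simp only [ht, Finset.mem_filter] at this; exact this.2⟩
  push_neg at hhall
  obtain ⟨s, hs⟩ := hhall
  have part1 : ∃ V ⊆ I, V.Nonempty ∧ activeCard B V < V.card := by
    refine ⟨s.image Subtype.val, ?_, ?_, ?_⟩
    · intro j hj
      obtain ⟨j', _, rfl⟩ := Finset.mem_image.mp hj
      exact j'.2
    · rw [Finset.image_nonempty]
      exact Finset.card_pos.mp (by omega)
    · have hcard : (s.image Subtype.val).card = s.card :=
        Finset.card_image_of_injective _ Subtype.val_injective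
      rw [hcard]
      have heq : (Finset.univ.filter fun i : Fin r =>
          ∃ j ∈ s.image Subtype.val, B i j = true) = s.biUnion t := by
        ext i
        simp only [Finset.mem_filter, Finset.mem_univ, true_and, Finset.mem_biUnion,
          Finset.mem_image, ht]
        constructor
        · rintro ⟨j, ⟨j', hj's, rfl⟩, hB⟩
          exact ⟨j', hj's, hB⟩
        · rintro ⟨j', hj's, hB⟩
          exact ⟨j'.1, ⟨j', hj's, rfl⟩, hB⟩
      unfold activeCard
      rw [heq]
      exact hs
  obtain ⟨V, hVI, hVne, hVlt⟩ := part1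
  obtain ⟨J, hJV, hJne, hJstop, hJlt⟩ := exists_stopping_aux B V.card V le_rfl hVlt
  have hJI : J ⊆ I := hJV.trans hVI
  refine ⟨⟨V, hVI, hVne, hVlt⟩, ⟨J, hJI, hJne, hJstop, hJlt⟩, ?_⟩
  -- Part 3: rank deficiency
  intro F _ H hH
  set A := H.submatrix id (fun j : {j : Fin n // j ∈ I} => j.1) with hA
  by_contra hrk
  push_neg at hrk
  have hrk_le : A.rank ≤ I.card := by
    have := A.rank_le_card_width
    rwa [Fintype.card_coe] at this
  have hrk_eq : A.rank = I.card := le_antisymm hrk_le hrk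
  -- columns of A are linearly independent
  have hli : LinearIndependent F Aᵀ := by
    refine linearIndependent_iff_card_eq_finrank_span.mpr ?_
    rw [Fintype.card_coe, Set.finrank]
    exact hrk_eq.symm.trans (Matrix.rank_eq_finrank_span_cols A)
  -- the subfamily indexed by J
  set e : {j : Fin n // j ∈ J} → {j : Fin n // j ∈ I} := fun j => ⟨j.1, hJI j.2⟩ with he
  have heinj : Function.Injective e := by
    intro a b hab
    exact Subtype.ext (by simpa [he] using congrArg Subtype.val hab)
  have hli' : LinearIndependent F (Aᵀ ∘ e) := hli.comp e heinj
  -- the active rows of J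
  set act : Finset (Fin r) := Finset.univ.filter fun i : Fin r => ∃ j ∈ J, B i j = true
    with hact
  set W : Submodule F (Fin r → F) :=
    Submodule.span F ((act.image fun i => (Pi.single i 1 : Fin r → F)) : Set (Fin r → F)) with hW
  have hmemW : ∀ j : {j : Fin n // j ∈ J}, (Aᵀ ∘ e) j ∈ W := by
    intro j
    have hexpand : (Aᵀ ∘ e) j = ∑ i ∈ act, (H i j.1) • (Pi.single i 1 : Fin r → F) := by
      funext i'
      rw [Finset.sum_apply]
      by_cases hi' : i' ∈ act
      · rw [Finset.sum_eq_single i']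
        · change A i' (e j) = _
          simp [hA, Matrix.submatrix, he, Pi.single_apply]
        · intro b _ hb
          simp [Pi.single_apply, hb]
        · intro h; exact absurd hi' h
      · have hB : B i' j.1 = false := by
          by_contra hc
          have hBtrue : B i' j.1 = true := by revert hc; cases B i' j.1 <;> simp
          exact hi' (Finset.mem_filter.mpr ⟨Finset.mem_univ _, ⟨j.1, j.2, hBtrue⟩⟩)
        have hH0 : H i' j.1 = 0 := by
          by_contra hc
          rw [(hH i' j.1).mp hc] at hB
          simp at hB
        have : ∀ i ∈ act, (H i j.1 • (Pi.single i 1 : Fin r → F)) i' = 0 := by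
          intro i hi
          have hne : i ≠ i' := fun h => hi' (h ▸ hi)
          simp [Pi.single_apply, hne.symm]
        rw [Finset.sum_eq_zero this]
        change A i' (e j) = _
        simp [hA, Matrix.submatrix, he, hH0]
    rw [hexpand]
    exact Submodule.sum_smul_mem W _ fun i hi =>
      Submodule.subset_span (Finset.mem_image_of_mem _ hi)
  -- hence J.card ≤ finrank W ≤ activeCard B J
  have hspan_le : Submodule.span F (Set.range (Aᵀ ∘ e)) ≤ W := by
    rw [Submodule.span_le]
    rintro v ⟨j, rfl⟩
    exact hmemW j
  have hfin : Module.finrank F (Submodule.span F (Set.range (Aᵀ ∘ e))) =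
      Fintype.card {j : Fin n // j ∈ J} := finrank_span_eq_card hli'
  have hWle : Module.finrank F W ≤ act.card := by
    have h1 := finrank_span_finset_le_card (R := F)
      (act.image fun i => (Pi.single i 1 : Fin r → F))
    rw [Set.finrank] at h1
    rw [hW]
    exact le_trans h1 Finset.card_image_le
  have hmono : Module.finrank F (Submodule.span F (Set.range (Aᵀ ∘ e))) ≤
      Module.finrank F W := Submodule.finrank_mono hspan_le
  rw [hfin, Fintype.card_coe] at hmono
  have : J.card ≤ activeCard B J := by
    unfold activeCard
    rw [← hact]
    omega
  omega
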